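/- Let C₁, C₂, C₃ be positive real constants, let α be a real number with 1/2 ≤ α ≤ 1, let H ≥ 1 be an integer, and set c = max{ √(8·C₁), √(2/C₃) } · √(1 + 2·C₂). If p is a real number with p ≥ c·H^α·(log H)² + 2·c, then there exist real numbers b₁, …, b_H such that: (i) b₁ = 1/p²; (ii) for every integer h with 2 ≤ h ≤ H, (h−1)·b_h − h·b_{h−1} ≥ C₁·b_h² + (C₂/p²)·h^{2α}; and (iii) b_h ≤ C₃ for every 1 ≤ h ≤ H. -/

import Mathlib

set_option maxHeartbeats 1000000

lemma harm_le_log : ∀ h : ℕ, ∑ j ∈ Finset.Icc 2 h, (1:ℝ)/j ≤ Real.log h := by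
  intro h
  induction h with
  | zero => simp
  | succ n ih =>
    rcases Nat.lt_or_ge n 1 with hn | hn
    · interval_cases n <;> simp
    · have h2 : 2 ≤ n + 1 := by omega
      rw [Finset.sum_Icc_succ_top h2]
      have hn0 : (0:ℝ) < n := by exact_mod_cast hn
      have hkey : Real.log n - Real.log (n+1) ≤ -(1/((n:ℝ)+1)) := by
        have hx : (0:ℝ) < (n:ℝ)/(n+1) := by positivity
        have h1 := Real.log_le_sub_one_of_pos hx
        rw [Real.log_div (ne_of_gt hn0) (by positivity)] at h1
        have h3 : (n:ℝ)/(n+1) - 1 = -(1/((n:ℝ)+1)) := by field_simp; ring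
        linarith
      push_cast
      linarith

noncomputable def auxS (α : ℝ) (n : ℕ) : ℝ :=
  ∑ j ∈ Finset.Icc 2 n, (j:ℝ)^(2*α) / ((j:ℝ)*((j:ℝ)-1))

lemma auxS_one (α : ℝ) : auxS α 1 = 0 := by
  unfold auxS
  rw [Finset.Icc_eq_empty (by omega)]
  simp

lemma auxS_succ (α : ℝ) (k : ℕ) (hk : 1 ≤ k) :
    auxS α (k+1) = auxS α k + ((k:ℝ)+1)^(2*α) / (((k:ℝ)+1)*(((k:ℝ)+1)-1)) := by
  unfold auxS
  rw [Finset.sum_Icc_succ_top (by omega)]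
  push_cast
  ring_nf

lemma auxS_nonneg (α : ℝ) (n : ℕ) : 0 ≤ auxS α n := by
  unfold auxS
  apply Finset.sum_nonneg
  intro j hj
  simp only [Finset.mem_Icc] at hj
  have : (2:ℝ) ≤ j := by exact_mod_cast hj.1
  have h1 : (0:ℝ) < (j:ℝ)*((j:ℝ)-1) := by nlinarith
  positivity

lemma auxS_le (α : ℝ) (hα₁ : 1/2 ≤ α) (h : ℕ) :
    auxS α h ≤ 2 * (h:ℝ)^(2*α-1) * Real.log h := by
  unfold auxS
  have hstep : ∀ j ∈ Finset.Icc 2 h, (j:ℝ)^(2*α) / ((j:ℝ)*((j:ℝ)-1)) ≤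
      2 * (h:ℝ)^(2*α-1) * ((1:ℝ)/j) := by
    intro j hj
    simp only [Finset.mem_Icc] at hj
    obtain ⟨hj2, hjh⟩ := hj
    have hj0 : (0:ℝ) < j := by
      have : (2:ℝ) ≤ j := by exact_mod_cast hj2
      linarith
    have he : (j:ℝ)^(2*α) = (j:ℝ)^(2*α-1) * j := by
      rw [Real.rpow_sub hj0, Real.rpow_one]
      field_simp
    have hle : (j:ℝ)^(2*α-1) ≤ (h:ℝ)^(2*α-1) := by
      apply Real.rpow_le_rpow (le_of_lt hj0) (by exact_mod_cast hjh)
      linarith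
    have hjp : (0:ℝ) ≤ (j:ℝ)^(2*α-1) := Real.rpow_nonneg (le_of_lt hj0) _
    have hj2' : (j:ℝ) ≤ 2*((j:ℝ)-1) := by
      have : (2:ℝ) ≤ j := by exact_mod_cast hj2
      linarith
    rw [he, div_le_iff₀ (show (0:ℝ) < (j:ℝ)*((j:ℝ)-1) by nlinarith)]
    have hrw : 2 * (h:ℝ)^(2*α-1) * ((1:ℝ)/j) * ((j:ℝ)*((j:ℝ)-1)) = 2*(h:ℝ)^(2*α-1)*((j:ℝ)-1) := by
      field_simp
    rw [hrw]
    nlinarith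
  calc ∑ j ∈ Finset.Icc 2 h, (j:ℝ)^(2*α) / ((j:ℝ)*((j:ℝ)-1))
      ≤ ∑ j ∈ Finset.Icc 2 h, 2 * (h:ℝ)^(2*α-1) * ((1:ℝ)/j) := Finset.sum_le_sum hstep
    _ = 2 * (h:ℝ)^(2*α-1) * ∑ j ∈ Finset.Icc 2 h, (1:ℝ)/j := by rw [Finset.mul_sum]
    _ ≤ 2 * (h:ℝ)^(2*α-1) * Real.log h := by
        apply mul_le_mul_of_nonneg_left (harm_le_log h)
        positivity

theorem stmt_10 (C₁ C₂ C₃ : ℝ) (hC₁ : 0 < C₁) (hC₂ : 0 < C₂) (hC₃ : 0 < C₃)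
    (α : ℝ) (hα₁ : 1 / 2 ≤ α) (hα₂ : α ≤ 1) (H : ℕ) (hH : 1 ≤ H)
    (c : ℝ) (hc : c = max (Real.sqrt (8 * C₁)) (Real.sqrt (2 / C₃)) * Real.sqrt (1 + 2 * C₂))
    (p : ℝ) (hp : p ≥ c * (H : ℝ) ^ α * (Real.log H) ^ 2 + 2 * c) :
    ∃ b : ℕ → ℝ,
      b 1 = 1 / p ^ 2 ∧
      (∀ h : ℕ, 2 ≤ h → h ≤ H →
        ((h : ℝ) - 1) * b h - (h : ℝ) * b (h - 1) ≥
          C₁ * (b h) ^ 2 + (C₂ / p ^ 2) * (h : ℝ) ^ (2 * α)) ∧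
      (∀ h : ℕ, 1 ≤ h → h ≤ H → b h ≤ C₃) := by
  set D : ℝ := 2*C₂ + 1/2 with hD
  set L : ℝ := Real.log H with hL
  -- basic positivity
  have hc0 : 0 < c := by
    rw [hc]
    have h1 : 0 < Real.sqrt (8*C₁) := Real.sqrt_pos.mpr (by linarith)
    have h2 : 0 < Real.sqrt (1+2*C₂) := Real.sqrt_pos.mpr (by linarith)
    exact mul_pos (lt_of_lt_of_le h1 (le_max_left _ _)) h2
  have hH1 : (1:ℝ) ≤ (H:ℝ) := by exact_mod_cast hH
  have hL0 : 0 ≤ L := Real.log_nonneg hH1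
  have hHa0 : 0 < (H:ℝ)^α := Real.rpow_pos_of_pos (by linarith) _
  have hD0 : 0 < D := by rw [hD]; linarith
  have hr : p ≥ c * ((H:ℝ)^α * L^2 + 2) := by rw [hL]; nlinarith
  have hr0 : 0 ≤ c * ((H:ℝ)^α * L^2 + 2) := by positivity
  have hp0 : 0 < p := lt_of_lt_of_le (by positivity) hr
  have hp2 : 0 < p^2 := by positivity
  -- squares of c
  have hcsq1 : 8*C₁*(1+2*C₂) ≤ c^2 := by
    have h1 : Real.sqrt (8*C₁) * Real.sqrt (1+2*C₂) ≤ c := by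
      rw [hc]
      exact mul_le_mul_of_nonneg_right (le_max_left _ _) (Real.sqrt_nonneg _)
    have h2 : (Real.sqrt (8*C₁) * Real.sqrt (1+2*C₂))^2 = 8*C₁*(1+2*C₂) := by
      rw [mul_pow, Real.sq_sqrt (by linarith), Real.sq_sqrt (by linarith)]
    calc 8*C₁*(1+2*C₂) = (Real.sqrt (8*C₁) * Real.sqrt (1+2*C₂))^2 := h2.symm
      _ ≤ c^2 := by
          apply pow_le_pow_left₀ (by positivity) h1
  have hcsq2 : (2/C₃)*(1+2*C₂) ≤ c^2 := by
    have h1 : Real.sqrt (2/C₃) * Real.sqrt (1+2*C₂) ≤ c := by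
      rw [hc]
      exact mul_le_mul_of_nonneg_right (le_max_right _ _) (Real.sqrt_nonneg _)
    have h2 : (Real.sqrt (2/C₃) * Real.sqrt (1+2*C₂))^2 = (2/C₃)*(1+2*C₂) := by
      rw [mul_pow, Real.sq_sqrt (by positivity), Real.sq_sqrt (by linarith)]
    calc (2/C₃)*(1+2*C₂) = (Real.sqrt (2/C₃) * Real.sqrt (1+2*C₂))^2 := h2.symm
      _ ≤ c^2 := by
          apply pow_le_pow_left₀ (by positivity) h1
  -- case analysis facts
  have hcases : ((H:ℝ)^α ≤ 2 ∧ L ≤ 1) ∨ 1 ≤ L := by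
    rcases Nat.lt_or_ge H 3 with h3 | h3
    · left
      have hH2 : (H:ℝ) ≤ 2 := by exact_mod_cast Nat.lt_succ_iff.mp h3
      constructor
      · calc (H:ℝ)^α ≤ (H:ℝ)^(1:ℝ) := Real.rpow_le_rpow_of_exponent_le hH1 hα₂
          _ = (H:ℝ) := Real.rpow_one _
          _ ≤ 2 := hH2
      · rw [hL]
        calc Real.log H ≤ Real.log 2 := Real.log_le_log (by linarith) hH2
          _ ≤ 1 := by linarith [Real.log_two_lt_d9]
    · right
      rw [hL]
      calc (1:ℝ) ≤ Real.log 3 := by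
            rw [Real.le_log_iff_exp_le (by norm_num)]
            exact le_trans (le_of_lt Real.exp_one_lt_d9) (by norm_num)
        _ ≤ Real.log H := Real.log_le_log (by norm_num) (by exact_mod_cast h3)
  have hF1 : (H:ℝ)^α * (1+2*D*L) ≤ (1+2*D) * ((H:ℝ)^α * L^2 + 2) := by
    rcases hcases with ⟨h1, h2⟩ | h1
    · have hHL : (H:ℝ)^α * L ≤ 2 := by nlinarith
      nlinarith [mul_nonneg hD0.le (mul_nonneg hHa0.le (sq_nonneg L)),
        mul_le_mul_of_nonneg_left hHL hD0.le,
        mul_nonneg hHa0.le (sq_nonneg L)]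
    · nlinarith [mul_nonneg hHa0.le (mul_nonneg hL0 (sub_nonneg.mpr h1)),
        mul_nonneg (mul_nonneg hD0.le hHa0.le) (mul_nonneg hL0 (sub_nonneg.mpr h1)),
        mul_nonneg hHa0.le (sub_nonneg.mpr h1),
        mul_nonneg (mul_nonneg hD0.le hHa0.le) (sub_nonneg.mpr h1)]
  have hF2 : (H:ℝ)^α ≤ (H:ℝ)^α * L^2 + 2 := by
    rcases hcases with ⟨h1, h2⟩ | h1
    · nlinarith [mul_nonneg hHa0.le (sq_nonneg L)]
    · nlinarith [mul_nonneg hHa0.le (mul_nonneg hL0 (sub_nonneg.mpr h1)),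
        mul_nonneg hHa0.le (sub_nonneg.mpr h1)]
  -- key bounds on p
  have hBnn : 0 ≤ (H:ℝ)^α * (1+2*D*L) := by positivity
  have hpB : c * ((H:ℝ)^α * (1+2*D*L)) ≤ (1+2*D) * p := by
    calc c * ((H:ℝ)^α * (1+2*D*L)) ≤ c * ((1+2*D) * ((H:ℝ)^α * L^2 + 2)) :=
          mul_le_mul_of_nonneg_left hF1 hc0.le
      _ = (1+2*D) * (c * ((H:ℝ)^α * L^2 + 2)) := by ring
      _ ≤ (1+2*D) * p := by
          apply mul_le_mul_of_nonneg_left hr (by linarith)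
  have hpBsq : (c * ((H:ℝ)^α * (1+2*D*L)))^2 ≤ ((1+2*D) * p)^2 :=
    pow_le_pow_left₀ (by positivity) hpB 2
  have keyA : C₁ * ((H:ℝ)^α * (1+2*D*L))^2 ≤ (D - C₂) * p^2 := by
    have e3 : 4*C₁*(1+2*C₂)^2 ≤ (D - C₂)*c^2 := by
      have := mul_le_mul_of_nonneg_left hcsq1 (show (0:ℝ) ≤ C₂ + 1/2 by linarith)
      rw [hD]
      nlinarith
    have hcc : (0:ℝ) < c^2 := by positivity
    rw [← mul_le_mul_iff_of_pos_right hcc]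
    calc C₁ * ((H:ℝ)^α * (1+2*D*L))^2 * c^2
        = C₁ * (c * ((H:ℝ)^α * (1+2*D*L)))^2 := by ring
      _ ≤ C₁ * ((1+2*D) * p)^2 := mul_le_mul_of_nonneg_left hpBsq hC₁.le
      _ = (4*C₁*(1+2*C₂)^2) * p^2 := by rw [hD]; ring
      _ ≤ ((D - C₂)*c^2) * p^2 := mul_le_mul_of_nonneg_right e3 (sq_nonneg p)
      _ = (D - C₂) * p^2 * c^2 := by ring
  have keyB : (H:ℝ)^(2*α) * (1+2*D*L) ≤ C₃ * p^2 := by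
    have h2a : (H:ℝ)^(2*α) = (H:ℝ)^α * (H:ℝ)^α := by
      rw [← Real.rpow_add (by linarith : (0:ℝ) < (H:ℝ))]
      ring_nf
    have hC3c : 1 + 2*D ≤ C₃ * c^2 := by
      have h5 : C₃ * ((2/C₃)*(1+2*C₂)) = 2*(1+2*C₂) := by field_simp
      have h6 := mul_le_mul_of_nonneg_left hcsq2 hC₃.le
      rw [hD]
      linarith [h5 ▸ h6]
    have hcc : (0:ℝ) < c^2 := by positivity
    rw [← mul_le_mul_iff_of_pos_right hcc, h2a]
    have hF2' : c * (H:ℝ)^α ≤ c * ((H:ℝ)^α * L^2 + 2) :=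
      mul_le_mul_of_nonneg_left hF2 hc0.le
    have hcp : c * ((H:ℝ)^α * L^2 + 2) ≤ p := hr
    calc (H:ℝ)^α * (H:ℝ)^α * (1+2*D*L) * c^2
        = (c * (H:ℝ)^α) * (c * ((H:ℝ)^α * (1+2*D*L))) := by ring
      _ ≤ p * ((1+2*D) * p) := by
          apply mul_le_mul (le_trans hF2' hcp) hpB (by positivity) hp0.le
      _ = (1+2*D) * p^2 := by ring
      _ ≤ (C₃ * c^2) * p^2 := mul_le_mul_of_nonneg_right hC3c (sq_nonneg p)
      _ = C₃ * p^2 * c^2 := by ring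
  -- pointwise bound on the construction
  have hbound : ∀ h : ℕ, 1 ≤ h → h ≤ H →
      (h:ℝ) * (1 + D * auxS α h) ≤ (h:ℝ)^α * ((H:ℝ)^α * (1+2*D*L)) := by
    intro h h1 hhH
    have hh1 : (1:ℝ) ≤ (h:ℝ) := by exact_mod_cast h1
    have hh0 : (0:ℝ) < (h:ℝ) := by linarith
    have hhH' : (h:ℝ) ≤ (H:ℝ) := by exact_mod_cast hhH
    have hlog0 : 0 ≤ Real.log h := Real.log_nonneg hh1
    have hlogL : Real.log h ≤ L := by
      rw [hL]; exact Real.log_le_log hh0 hhH'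
    have hxa0 : 0 ≤ (h:ℝ)^α := Real.rpow_nonneg hh0.le _
    have hxaH : (h:ℝ)^α ≤ (H:ℝ)^α := Real.rpow_le_rpow hh0.le hhH' (by linarith)
    have e2a : (h:ℝ)^(2*α) = (h:ℝ)^α * (h:ℝ)^α := by
      rw [← Real.rpow_add hh0]; ring_nf
    have e21 : (h:ℝ)^(2*α) = (h:ℝ) * (h:ℝ)^(2*α-1) := by
      rw [Real.rpow_sub hh0, Real.rpow_one]
      field_simp
    have ehx : (h:ℝ) ≤ (h:ℝ)^α * (h:ℝ)^α := by
      have e1 : (h:ℝ) = (h:ℝ)^(1-α) * (h:ℝ)^α := by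
        rw [← Real.rpow_add hh0]; norm_num
      have e2 : (h:ℝ)^(1-α) ≤ (h:ℝ)^α :=
        Real.rpow_le_rpow_of_exponent_le hh1 (by linarith)
      calc (h:ℝ) = (h:ℝ)^(1-α) * (h:ℝ)^α := e1
        _ ≤ (h:ℝ)^α * (h:ℝ)^α := mul_le_mul_of_nonneg_right e2 hxa0
    have hSb : (h:ℝ) * auxS α h ≤ 2 * ((h:ℝ)^α * ((h:ℝ)^α * Real.log h)) := by
      have := mul_le_mul_of_nonneg_left (auxS_le α hα₁ h) hh0.le
      calc (h:ℝ) * auxS α h ≤ (h:ℝ) * (2 * (h:ℝ)^(2*α-1) * Real.log h) := this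
        _ = 2 * ((h:ℝ) * (h:ℝ)^(2*α-1)) * Real.log h := by ring
        _ = 2 * ((h:ℝ)^α * ((h:ℝ)^α * Real.log h)) := by rw [← e21, e2a]; ring
    have hXG : (h:ℝ)^α * Real.log h ≤ (H:ℝ)^α * L :=
      mul_le_mul hxaH hlogL hlog0 (by positivity)
    have hSb2 : (h:ℝ)^α * ((h:ℝ)^α * Real.log h) ≤ (h:ℝ)^α * ((H:ℝ)^α * L) :=
      mul_le_mul_of_nonneg_left hXG hxa0
    have hxy : (h:ℝ)^α * (h:ℝ)^α ≤ (h:ℝ)^α * (H:ℝ)^α :=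
      mul_le_mul_of_nonneg_left hxaH hxa0
    calc (h:ℝ) * (1 + D * auxS α h) = (h:ℝ) + D * ((h:ℝ) * auxS α h) := by ring
      _ ≤ (h:ℝ)^α * (h:ℝ)^α + D * (2 * ((h:ℝ)^α * ((h:ℝ)^α * Real.log h))) := by
          have := mul_le_mul_of_nonneg_left hSb hD0.le
          linarith
      _ ≤ (h:ℝ)^α * (H:ℝ)^α + D * (2 * ((h:ℝ)^α * ((H:ℝ)^α * L))) := by
          have := mul_le_mul_of_nonneg_left hSb2 hD0.le
          linarith
      _ = (h:ℝ)^α * ((H:ℝ)^α * (1+2*D*L)) := by ring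
  refine ⟨fun n => (n:ℝ) * (1 + D * auxS α n) / p^2, ?_, ?_, ?_⟩
  · simp [auxS_one]
  · -- the recursive inequality
    intro h h2 hhH
    obtain ⟨k, rfl⟩ : ∃ k, h = k + 1 := ⟨h - 1, by omega⟩
    have hk : 1 ≤ k := by omega
    have hk1 : (1:ℝ) ≤ (k:ℝ) := by exact_mod_cast hk
    have hx0 : (0:ℝ) < (k:ℝ) + 1 := by linarith
    simp only [Nat.add_sub_cancel]
    push_cast
    have hrec := auxS_succ α k hk
    have E1 : ((k:ℝ) + 1 - 1) * (((k:ℝ)+1) * (1 + D * auxS α (k+1)) / p^2)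
        - ((k:ℝ) + 1) * ((k:ℝ) * (1 + D * auxS α k) / p^2)
        = D * ((k:ℝ)+1)^(2*α) / p^2 := by
      rw [hrec]
      have hkk : ((k:ℝ)+1) * (((k:ℝ)+1) - 1) ≠ 0 := by nlinarith
      have hk0 : (k:ℝ) ≠ 0 := by positivity
      rw [add_sub_cancel_right]
      field_simp
      ring
    have hble : ((k:ℝ)+1) * (1 + D * auxS α (k+1)) ≤
        ((k:ℝ)+1)^α * ((H:ℝ)^α * (1+2*D*L)) := by
      have := hbound (k+1) (by omega) hhH
      push_cast at this
      exact this
    have hblnn : 0 ≤ ((k:ℝ)+1) * (1 + D * auxS α (k+1)) := by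
      have h1' := auxS_nonneg α (k+1)
      have h2' : (0:ℝ) ≤ 1 + D * auxS α (k+1) := by nlinarith
      exact mul_nonneg (by linarith) h2'
    have e2a : (((k:ℝ)+1))^(2*α) = (((k:ℝ)+1))^α * (((k:ℝ)+1))^α := by
      rw [← Real.rpow_add hx0]; ring_nf
    have E2 : C₁ * ((((k:ℝ)+1) * (1 + D * auxS α (k+1))))^2 ≤
        (D - C₂) * p^2 * (((k:ℝ)+1))^(2*α) := by
      calc C₁ * ((((k:ℝ)+1) * (1 + D * auxS α (k+1))))^2
          ≤ C₁ * ((((k:ℝ)+1))^α * ((H:ℝ)^α * (1+2*D*L)))^2 := by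
            apply mul_le_mul_of_nonneg_left _ hC₁.le
            exact pow_le_pow_left₀ hblnn hble 2
        _ = ((((k:ℝ)+1))^α)^2 * (C₁ * ((H:ℝ)^α * (1+2*D*L))^2) := by ring
        _ ≤ ((((k:ℝ)+1))^α)^2 * ((D - C₂) * p^2) := by
            apply mul_le_mul_of_nonneg_left keyA (by positivity)
        _ = (D - C₂) * p^2 * (((k:ℝ)+1))^(2*α) := by rw [e2a]; ring
    rw [ge_iff_le, E1]
    have hstep : C₁ * (((k:ℝ)+1) * (1 + D * auxS α (k+1)) / p^2)^2
        ≤ (D - C₂) * ((k:ℝ)+1)^(2*α) / p^2 := by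
      have hq : C₁ * (((k:ℝ)+1) * (1 + D * auxS α (k+1)) / p^2)^2
          = C₁ * ((((k:ℝ)+1) * (1 + D * auxS α (k+1))))^2 / (p^2)^2 := by ring
      rw [hq, div_le_div_iff₀ (by positivity) hp2]
      have := mul_le_mul_of_nonneg_right E2 (sq_nonneg p)
      calc C₁ * (((k:ℝ)+1) * (1 + D * auxS α (k+1)))^2 * p^2
          ≤ (D - C₂) * p^2 * ((k:ℝ)+1)^(2*α) * p^2 := this
        _ = (D - C₂) * ((k:ℝ)+1)^(2*α) * (p^2)^2 := by ring
    have hid : (D - C₂) * ((k:ℝ)+1)^(2*α) / p^2 + (C₂/p^2) * ((k:ℝ)+1)^(2*α)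
        = D * ((k:ℝ)+1)^(2*α) / p^2 := by ring
    linarith
  · -- upper bound by C₃
    intro h h1 hhH
    have hble := hbound h h1 hhH
    have hh1 : (1:ℝ) ≤ (h:ℝ) := by exact_mod_cast h1
    have hxaH : (h:ℝ)^α ≤ (H:ℝ)^α := Real.rpow_le_rpow (by linarith) (by exact_mod_cast hhH) (by linarith)
    have h2a : (H:ℝ)^(2*α) = (H:ℝ)^α * (H:ℝ)^α := by
      rw [← Real.rpow_add (by linarith : (0:ℝ) < (H:ℝ))]; ring_nf
    rw [div_le_iff₀ hp2]
    calc (h:ℝ) * (1 + D * auxS α h) ≤ (h:ℝ)^α * ((H:ℝ)^α * (1+2*D*L)) := hble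
      _ ≤ (H:ℝ)^α * ((H:ℝ)^α * (1+2*D*L)) := mul_le_mul_of_nonneg_right hxaH hBnn
      _ = (H:ℝ)^(2*α) * (1+2*D*L) := by rw [h2a]; ring
      _ ≤ C₃ * p^2 := keyB
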